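/- arXiv:2010.15882 — 8 statements merged into one kernel-verified Lean document; each statement's English description precedes it below -/
import Mathlib

section
/- The sequence g_n = \sum_{k=1}^n (p_k - 1)/(p_1 p_2 \cdots p_{k-1}) is strictly increasing in n and satisfies g_n < 3 for all n \ge 1; consequently the infinite series \sum_{k=1}^\infty (p_k - 1)/(p_1 p_2 \cdots p_{k-1}) converges, and its sum f_1 satisfies 2 < f_1 < 3. -/
open scoped BigOperators

/-- `p k` is the `(k+1)`-st prime, i.e. the paper's `p_{k+1}` (so `p 0 = 2`). -/
noncomputable def p (k : ℕ) : ℕ := Nat.nth Nat.Prime k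

/-- The `k`-th summand `(p_{k+1} - 1) / (p_1 ⋯ p_k)` of the series (0-indexed). -/
noncomputable def primeTerm (k : ℕ) : ℝ :=
  ((p k : ℝ) - 1) / ∏ i ∈ Finset.range k, (p i : ℝ)

/-- The partial sum `g n = ∑_{k=1}^{n} (p_k - 1)/(p_1 ⋯ p_{k-1})` (0-indexed sum). -/
noncomputable def g (n : ℕ) : ℝ := ∑ k ∈ Finset.range n, primeTerm k

lemma p_prime (k : ℕ) : Nat.Prime (p k) :=
  Nat.prime_nth_prime k

lemma p_val {n k : ℕ} (hn : Nat.Prime n) (hc : Nat.count Nat.Prime n = k) : p k = n := by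
  have := Nat.nth_count (p := Nat.Prime) hn
  rwa [hc] at this

lemma p0 : p 0 = 2 := p_val (by norm_num) (by decide)
lemma p1 : p 1 = 3 := p_val (by norm_num) (by decide)
lemma p2 : p 2 = 5 := p_val (by norm_num) (by decide)
lemma p3 : p 3 = 7 := p_val (by norm_num) (by decide)
lemma p4 : p 4 = 11 := p_val (by norm_num) (by decide)

lemma p_mono : StrictMono p := Nat.nth_strictMono Nat.infinite_setOf_prime

lemma two_le_p (k : ℕ) : 2 ≤ p k := (p_prime k).two_le

lemma p_bertrand (k : ℕ) : p (k + 1) ≤ 2 * p k := by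
  obtain ⟨q, hq, hlt, hle⟩ := Nat.exists_prime_lt_and_le_two_mul (p k)
    (by have := two_le_p k; omega)
  refine le_trans ?_ hle
  by_contra h
  push_neg at h
  have h2 : q ≤ p k := Nat.le_nth_of_lt_nth_succ (p := Nat.Prime) h hq
  omega

lemma prod_pos (k : ℕ) : 0 < ∏ i ∈ Finset.range k, (p i : ℝ) := by
  apply Finset.prod_pos
  intro i _
  exact_mod_cast (p_prime i).pos

lemma primeTerm_pos (k : ℕ) : 0 < primeTerm k := by
  apply div_pos _ (prod_pos k)
  have := two_le_p k
  have : (2 : ℝ) ≤ (p k : ℝ) := by exact_mod_cast this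
  linarith

lemma primeTerm0 : primeTerm 0 = 1 := by
  norm_num [primeTerm, p0]

lemma primeTerm1 : primeTerm 1 = 1 := by
  rw [primeTerm, Finset.prod_range_one, p0, p1]; norm_num

lemma primeTerm2 : primeTerm 2 = 2 / 3 := by
  rw [primeTerm, Finset.prod_range_succ, Finset.prod_range_one, p0, p1, p2]; norm_num

lemma primeTerm3 : primeTerm 3 = 1 / 5 := by
  rw [primeTerm, Finset.prod_range_succ, Finset.prod_range_succ, Finset.prod_range_one,
    p0, p1, p2, p3]
  norm_num

lemma primeTerm4 : primeTerm 4 = 1 / 21 := by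
  rw [primeTerm, Finset.prod_range_succ, Finset.prod_range_succ, Finset.prod_range_succ,
    Finset.prod_range_one, p0, p1, p2, p3, p4]
  norm_num

-- ratio bound for k ≥ 3 : primeTerm (k+1) ≤ (1/3) * primeTerm k
lemma ratio (k : ℕ) (hk : 3 ≤ k) : primeTerm (k + 1) ≤ (1/3) * primeTerm k := by
  have hp7 : 7 ≤ p k := by
    calc 7 = p 3 := p3.symm
    _ ≤ p k := p_mono.monotone hk
  have hb : p (k+1) ≤ 2 * p k := p_bertrand k
  have hprod := prod_pos k
  have hpk : (0:ℝ) < (p k : ℝ) := by positivity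
  rw [primeTerm, primeTerm, Finset.prod_range_succ]
  rw [div_le_iff₀ (by positivity)]
  have h7 : (7:ℝ) ≤ (p k : ℝ) := by exact_mod_cast hp7
  have hb' : ((p (k+1) : ℝ)) ≤ 2 * (p k : ℝ) := by exact_mod_cast hb
  have key : (p (k+1) : ℝ) - 1 ≤ (1/3) * (((p k : ℝ) - 1) * (p k : ℝ)) := by nlinarith
  calc (p (k+1) : ℝ) - 1 ≤ (1/3) * (((p k : ℝ) - 1) * (p k : ℝ)) := key
    _ = 1 / 3 * (((p k:ℝ) - 1) / ∏ i ∈ Finset.range k, (p i : ℝ)) *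
        ((∏ i ∈ Finset.range k, (p i : ℝ)) * (p k : ℝ)) := by
        field_simp

lemma primeTerm_tail (j : ℕ) : primeTerm (j + 4) ≤ (1/21) * (1/3)^j := by
  induction j with
  | zero =>
    rw [show (0+4)=4 from rfl, primeTerm4]
    norm_num
  | succ n ih =>
    have h := ratio (n + 4) (by omega)
    calc primeTerm (n + 1 + 4) = primeTerm ((n + 4) + 1) := by ring_nf
      _ ≤ (1/3) * primeTerm (n + 4) := h
      _ ≤ (1/3) * ((1/21) * (1/3)^n) := by
          have := primeTerm_pos (n+4); nlinarith
      _ = (1/21) * (1/3)^(n+1) := by ring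

lemma summable_primeTerm : Summable primeTerm := by
  rw [← summable_nat_add_iff 4]
  apply Summable.of_nonneg_of_le (fun j => (primeTerm_pos _).le) (fun j => primeTerm_tail j)
  exact (summable_geometric_of_lt_one (by norm_num) (by norm_num)).mul_left _

lemma tsum_lt_three : (∑' k, primeTerm k) < 3 := by
  rw [← Summable.sum_add_tsum_nat_add 4 summable_primeTerm]
  have hsum : ∑ k ∈ Finset.range 4, primeTerm k = 2 + 2/3 + 1/5 := by
    simp [Finset.sum_range_succ, primeTerm0, primeTerm1, primeTerm2, primeTerm3]
    ring
  have htail : (∑' j, primeTerm (j + 4)) ≤ 1/14 := by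
    have h1 : (∑' j, primeTerm (j + 4)) ≤ ∑' j : ℕ, (1/21 : ℝ) * (1/3)^j := by
      apply Summable.tsum_le_tsum primeTerm_tail
      · exact (summable_nat_add_iff 4).mpr summable_primeTerm
      · exact (summable_geometric_of_lt_one (by norm_num) (by norm_num)).mul_left _
    have h2 : ∑' j : ℕ, (1/21 : ℝ) * (1/3)^j = (1/21) * (3/2) := by
      rw [tsum_mul_left, tsum_geometric_of_lt_one (by norm_num) (by norm_num)]
      norm_num
    linarith
  rw [hsum]
  linarith

theorem statement0 :
    StrictMono g ∧ (∀ n, 1 ≤ n → g n < 3) ∧ Summable primeTerm ∧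
      2 < ∑' k, primeTerm k ∧ (∑' k, primeTerm k) < 3 := by
  have hmono : StrictMono g := by
    apply strictMono_nat_of_lt_succ
    intro n
    have : g (n+1) = g n + primeTerm n := Finset.sum_range_succ _ _
    have := primeTerm_pos n
    linarith [Finset.sum_range_succ primeTerm n, primeTerm_pos n]
  have hle : ∀ n, g n ≤ ∑' k, primeTerm k := fun n =>
    Summable.sum_le_tsum (Finset.range n) (fun i _ => (primeTerm_pos i).le) summable_primeTerm
  refine ⟨hmono, fun n _ => lt_of_le_of_lt (hle n) tsum_lt_three, summable_primeTerm, ?_,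
    tsum_lt_three⟩
  have h3 : g 3 = 2 + 2/3 := by
    simp [g, Finset.sum_range_succ, primeTerm0, primeTerm1, primeTerm2]
    ring
  calc (2:ℝ) < g 3 := by rw [h3]; norm_num
    _ ≤ _ := hle 3
end

section
/- The constant f_1 = \sum_{k=1}^\infty (p_k - 1)/(p_1 p_2 \cdots p_{k-1}) is irrational. -/
open scoped BigOperators

namespace PGaux

lemma hp (k : ℕ) : (p k).Prime := Nat.prime_nth_prime k

lemma p0 : p 0 = 2 := Nat.nth_prime_zero_eq_two

lemma p1 : p 1 = 3 := Nat.nth_prime_one_eq_three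

lemma p_sm : StrictMono p := Nat.nth_strictMono Nat.infinite_setOf_prime

lemma two_le (k : ℕ) : 2 ≤ p k := (hp k).two_le

lemma add_two_le (k : ℕ) : k + 2 ≤ p k := Nat.add_two_le_nth_prime k

lemma p_pos (k : ℕ) : 0 < p k := (hp k).pos

/-- minimality of the next prime -/
lemma succ_le {k q : ℕ} (hq : q.Prime) (h : p k < q) : p (k + 1) ≤ q := by
  have hinf := Nat.infinite_setOf_prime
  have h1 : k < Nat.count Nat.Prime q := (Nat.lt_nth_iff_count_lt hinf).mpr h
  have h2 : k + 1 < Nat.count Nat.Prime (q + 1) := by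
    rw [Nat.count_succ]
    simp [hq]
    omega
  have h4 : p (k + 1) < q + 1 := (Nat.lt_nth_iff_count_lt hinf).mp h2
  omega

lemma bertrand (k : ℕ) : p (k + 1) < 2 * p k := by
  obtain ⟨q, hq, h1, h2⟩ := Nat.exists_prime_lt_and_le_two_mul (p k) (p_pos k).ne'
  have h3 := succ_le hq h1
  rcases lt_or_eq_of_le h2 with h | h
  · omega
  · exfalso
    rcases hq.eq_one_or_self_of_dvd 2 ⟨p k, h⟩ with h' | h' <;>
      have := two_le k <;> omega

lemma gap {k : ℕ} (hk : 1 ≤ k) : p k + 2 ≤ p (k + 1) := by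
  have h3 : 3 ≤ p k := p1 ▸ p_sm.monotone hk
  have h3' : 3 ≤ p (k + 1) := le_trans h3 (p_sm.monotone (Nat.le_succ k))
  have hlt : p k < p (k + 1) := p_sm (Nat.lt_succ_self k)
  obtain ⟨a, ha⟩ := (hp k).odd_of_ne_two (by omega)
  obtain ⟨b, hb⟩ := (hp (k + 1)).odd_of_ne_two (by omega)
  omega

lemma pow_le (n k : ℕ) : p (n + k) ≤ 2 ^ k * p n := by
  induction k with
  | zero => simp
  | succ k ih =>
    have := bertrand (n + k)
    have : p (n + (k + 1)) < 2 * p (n + k) := by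
      have : n + (k + 1) = (n + k) + 1 := by ring
      rw [this]; exact bertrand (n + k)
    calc p (n + (k + 1)) ≤ 2 * p (n + k) := this.le
      _ ≤ 2 * (2 ^ k * p n) := by omega
      _ = 2 ^ (k + 1) * p n := by ring

noncomputable def P (n : ℕ) : ℝ := ∏ i ∈ Finset.range n, (p i : ℝ)

lemma P_pos (n : ℕ) : 0 < P n :=
  Finset.prod_pos fun i _ => by exact_mod_cast p_pos i

lemma three_pow_le (k : ℕ) : (3 : ℝ) ^ k ≤ 2 * P k := by
  induction k with
  | zero => norm_num [P]
  | succ k ih =>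
    rcases Nat.eq_zero_or_pos k with rfl | hk
    · norm_num [P, p0]
    · have h3 : (3 : ℝ) ≤ p k := by exact_mod_cast p1 ▸ p_sm.monotone hk
      have hP := P_pos k
      have : P (k + 1) = P k * p k := Finset.prod_range_succ _ k
      rw [this]
      calc (3:ℝ) ^ (k+1) = 3 ^ k * 3 := by ring
        _ ≤ (2 * P k) * 3 := by nlinarith [pow_pos (by norm_num : (0:ℝ) < 3) k]
        _ ≤ 2 * (P k * p k) := by nlinarith

lemma primeTerm_nonneg (k : ℕ) : 0 ≤ primeTerm k := by
  unfold primeTerm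
  apply div_nonneg
  · have := two_le k
    have : (2 : ℝ) ≤ p k := by exact_mod_cast this
    linarith
  · exact (P_pos k).le

lemma primeTerm_le (k : ℕ) : primeTerm k ≤ 8 * (2 / 3 : ℝ) ^ k := by
  have hnum : ((p k : ℝ) - 1) ≤ 2 ^ (k + 2) := by
    have h1 : p k ≤ 2 ^ k * p 0 := by simpa using pow_le 0 k
    have h2 : p k ≤ 2 ^ (k + 2) := by
      rw [p0] at h1
      calc p k ≤ 2 ^ k * 2 := h1
        _ ≤ 2 ^ (k + 2) := by
          have : (2:ℕ) ^ k * 2 = 2 ^ (k+1) := by ring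
          rw [this]
          exact Nat.pow_le_pow_right (by norm_num) (by omega)
    have : (p k : ℝ) ≤ 2 ^ (k + 2) := by exact_mod_cast h2
    linarith
  have hden : (3 : ℝ) ^ k / 2 ≤ P k := by
    have := three_pow_le k
    linarith
  have h8 : (8 : ℝ) * (2/3)^k = 2^(k+2) / (3^k / 2) := by
    rw [div_pow]
    have h3 : (3:ℝ)^k ≠ 0 := by positivity
    field_simp
    ring
  rw [h8]
  unfold primeTerm
  apply div_le_div₀ (by positivity) hnum (by positivity) hden

lemma summable_primeTerm : Summable primeTerm := by
  apply Summable.of_nonneg_of_le primeTerm_nonneg primeTerm_le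
  exact (summable_geometric_of_lt_one (by norm_num) (by norm_num)).mul_left 8


noncomputable def R (n : ℕ) : ℝ := ∑' k, primeTerm (n + k)

noncomputable def t (n : ℕ) : ℝ := P n * R n

lemma summable_shift (n : ℕ) : Summable fun k => primeTerm (n + k) :=
  summable_primeTerm.comp_injective (add_right_injective n)

lemma R_rec (n : ℕ) : R n = primeTerm n + R (n + 1) := by
  have h := Summable.tsum_eq_zero_add (summable_shift n)
  rw [R, h, Nat.add_zero, R]
  exact congrArg (HAdd.hAdd (primeTerm n))
    (tsum_congr fun k => by rw [show n + (k + 1) = (n + 1) + k from by ring])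

lemma P_mul_primeTerm (n : ℕ) : P n * primeTerm n = (p n : ℝ) - 1 := by
  unfold primeTerm
  exact mul_div_cancel₀ _ (P_pos n).ne'

lemma t_rec (n : ℕ) : t (n + 1) = p n * t n - p n * ((p n : ℝ) - 1) := by
  have h1 : P (n + 1) = P n * p n := Finset.prod_range_succ _ n
  have h2 : R (n + 1) = R n - primeTerm n := by rw [R_rec n]; ring
  have h3 := P_mul_primeTerm n
  rw [t, t, h1, h2]
  nlinarith [h3]

noncomputable def g (n k : ℕ) : ℝ :=
  ((p (n + k) : ℝ) - 1) / ∏ i ∈ Finset.range k, (p (n + i) : ℝ)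

lemma Q_pos (n k : ℕ) : 0 < ∏ i ∈ Finset.range k, (p (n + i) : ℝ) :=
  Finset.prod_pos fun i _ => by exact_mod_cast p_pos (n + i)

lemma g_eq (n k : ℕ) : g n k = P n * primeTerm (n + k) := by
  have hP : (∏ i ∈ Finset.range n, (p i : ℝ)) ≠ 0 := (P_pos n).ne'
  simp only [g, primeTerm, P, Finset.prod_range_add]
  rw [mul_div_assoc', mul_div_mul_left _ _ hP]

lemma g_nonneg (n k : ℕ) : 0 ≤ g n k :=
  (g_eq n k) ▸ mul_nonneg (P_pos n).le (primeTerm_nonneg (n + k))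

lemma summable_g (n : ℕ) : Summable (g n) := by
  have : g n = fun k => P n * primeTerm (n + k) := funext (g_eq n)
  rw [this]
  exact (summable_shift n).mul_left (P n)

lemma t_eq (n : ℕ) : t n = ∑' k, g n k := by
  rw [t, R, ← tsum_mul_left]
  exact tsum_congr fun k => (g_eq n k).symm

lemma g_zero (n : ℕ) : g n 0 = (p n : ℝ) - 1 := by simp [g]

lemma g_one (n : ℕ) : g n 1 = ((p (n + 1) : ℝ) - 1) / (p n : ℝ) := by simp [g]

lemma t_split (n : ℕ) : t n = g n 0 + g n 1 + ∑' k, g n (k + 2) := by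
  rw [t_eq, Summable.tsum_eq_zero_add (summable_g n),
    Summable.tsum_eq_zero_add ((summable_nat_add_iff 1).mpr (summable_g n))]
  rw [add_assoc]

lemma t_lb {n : ℕ} (hn : 1 ≤ n) : (p n : ℝ) < t n := by
  rw [t_split, g_zero, g_one]
  have h1 : (0:ℝ) ≤ ∑' k, g n (k + 2) := tsum_nonneg fun k => g_nonneg n _
  have h2 : ((p n : ℝ) + 2) ≤ p (n + 1) := by exact_mod_cast gap hn
  have hx : (0:ℝ) < p n := by exact_mod_cast p_pos n
  have h3 : (1:ℝ) < ((p (n + 1) : ℝ) - 1) / (p n : ℝ) := by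
    rw [lt_div_iff₀ hx]; linarith
  linarith

lemma t_ub {n : ℕ} (h7 : (7:ℝ) ≤ p n) : t n ≤ (p n : ℝ) + 2 := by
  have hx : (0:ℝ) < p n := by linarith
  have hx2 : (2:ℝ) < p n := by linarith
  have hg1 : g n 1 ≤ 2 := by
    rw [g_one]
    have hb : (p (n + 1) : ℝ) ≤ 2 * p n := by exact_mod_cast (bertrand n).le
    rw [div_le_iff₀ hx]; linarith
  have hgb : ∀ k, g n (k + 2) ≤ (4 / (p n : ℝ)) * (2 / (p n : ℝ)) ^ k := by
    intro k
    have hnum : ((p (n + (k + 2)) : ℝ) - 1) ≤ 2 ^ (k + 2) * p n := by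
      have := pow_le n (k + 2)
      have : (p (n + (k + 2)) : ℝ) ≤ 2 ^ (k + 2) * p n := by exact_mod_cast this
      linarith
    have hden : (p n : ℝ) ^ (k + 2) ≤ ∏ i ∈ Finset.range (k + 2), (p (n + i) : ℝ) := by
      calc (p n : ℝ) ^ (k + 2) = ∏ _i ∈ Finset.range (k + 2), (p n : ℝ) := by
            rw [Finset.prod_const, Finset.card_range]
        _ ≤ _ := Finset.prod_le_prod (fun i _ => hx.le)
            (fun i _ => by exact_mod_cast p_sm.monotone (Nat.le_add_right n i))
    have h4 : g n (k + 2) ≤ (2 ^ (k + 2) * (p n : ℝ)) / ((p n : ℝ) ^ (k + 2)) := by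
      unfold g
      exact div_le_div₀ (by positivity) hnum (by positivity) hden
    have h5 : (2 ^ (k + 2) * (p n : ℝ)) / ((p n : ℝ) ^ (k + 2))
        = (4 / (p n : ℝ)) * (2 / (p n : ℝ)) ^ k := by
      rw [div_pow]
      field_simp
      ring
    linarith [h4, h5.symm.le]
  have hr0 : (0:ℝ) ≤ 2 / (p n : ℝ) := by positivity
  have hr1 : 2 / (p n : ℝ) < 1 := by rw [div_lt_one hx]; linarith
  have hgeo : Summable fun k => (4 / (p n : ℝ)) * (2 / (p n : ℝ)) ^ k :=
    (summable_geometric_of_lt_one hr0 hr1).mul_left _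
  have htail : (∑' k, g n (k + 2)) ≤ ∑' k, (4 / (p n : ℝ)) * (2 / (p n : ℝ)) ^ k :=
    Summable.tsum_le_tsum hgb ((summable_nat_add_iff 2).mpr (summable_g n)) hgeo
  have hval : (∑' k, (4 / (p n : ℝ)) * (2 / (p n : ℝ)) ^ k) = 4 / ((p n : ℝ) - 2) := by
    rw [tsum_mul_left, tsum_geometric_of_lt_one hr0 hr1]
    rw [show (1 : ℝ) - 2 / (p n : ℝ) = ((p n : ℝ) - 2) / (p n : ℝ) from by field_simp]
    rw [inv_div]
    field_simp
  have htail2 : (∑' k, g n (k + 2)) ≤ 1 := by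
    rw [hval] at htail
    have : (4:ℝ) / ((p n : ℝ) - 2) ≤ 1 := by
      rw [div_le_one (by linarith)]; linarith
    linarith
  have := t_split n
  rw [g_zero] at this
  linarith [hg1]

noncomputable def A (a b : ℤ) : ℕ → ℤ
  | 0 => a
  | n + 1 => p n * A a b n - b * p n * ((p n : ℤ) - 1)

lemma A_cast (a b : ℤ) (h0 : (a : ℝ) = b * t 0) :
    ∀ n, (A a b n : ℝ) = b * t n := by
  intro n
  induction n with
  | zero => exact h0
  | succ n ih =>
    have : A a b (n + 1) = p n * A a b n - b * p n * ((p n : ℤ) - 1) := rfl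
    rw [this]
    push_cast
    rw [ih, t_rec]
    ring

lemma t_zero : t 0 = ∑' k, primeTerm k := by
  rw [t, R, P]
  simp

end PGaux

/-- The prime-generating constant `f_1 = ∑_{k=1}^∞ (p_k - 1)/(p_1 ⋯ p_{k-1})` is irrational. -/
theorem statement5 : Irrational (∑' k, primeTerm k) := by
  open PGaux in
  rintro ⟨q, hq⟩
  set b : ℤ := (q.den : ℤ) with hbdef
  have hb0 : (0:ℤ) < b := by rw [hbdef]; exact_mod_cast q.pos
  have hbR : (0:ℝ) < (b:ℝ) := by exact_mod_cast hb0
  have hden : ((q.den : ℝ)) ≠ 0 := by positivity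
  have h00 : ((q.num : ℝ)) = b * t 0 := by
    rw [t_zero, ← hq, Rat.cast_def, hbdef]
    push_cast
    field_simp
  -- integer bounds on A for large n
  have hbound : ∀ n, 4 * q.den + 7 ≤ n →
      (b * p n + 1 ≤ A q.num b n ∧ A q.num b n ≤ b * p n + 2 * b) := by
    intro n hn
    have hpn : n + 2 ≤ p n := add_two_le n
    have hp7 : (7:ℝ) ≤ p n := by exact_mod_cast (by omega : 7 ≤ p n)
    have hn1 : 1 ≤ n := by omega
    have hA := A_cast q.num b h00 n
    have hlb := t_lb hn1
    have hub := t_ub hp7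
    constructor
    · have h1 : (b:ℝ) * p n < A q.num b n := by
        rw [hA]; exact mul_lt_mul_of_pos_left hlb hbR
      have h2 : (b * p n : ℤ) < A q.num b n := by exact_mod_cast h1
      omega
    · have h1 : (A q.num b n : ℝ) ≤ (b:ℝ) * p n + 2 * b := by
        rw [hA]; nlinarith
      exact_mod_cast h1
  -- key growth inequality
  have key : ∀ n, 4 * q.den + 7 ≤ n → 2 * b * p n + p n ≤ 2 * b * p (n + 1) := by
    intro n hn
    obtain ⟨h1, _⟩ := hbound n hn
    obtain ⟨_, h2⟩ := hbound (n + 1) (by omega)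
    have hrec : A q.num b (n + 1) = p n * A q.num b n - b * p n * ((p n : ℤ) - 1) := rfl
    have hpn : (4 * b + 9 : ℤ) ≤ p n := by
      have h3 : 4 * q.den + 9 ≤ p n := by have := add_two_le n; omega
      rw [hbdef]; exact_mod_cast h3
    have hp0 : (0:ℤ) ≤ (p n : ℤ) := by positivity
    have hfac : (0:ℤ) ≤ (p n : ℤ) * (A q.num b n - b * p n + b - (b + 1)) :=
      mul_nonneg hp0 (by omega)
    rw [hrec] at h2
    nlinarith [h2, hfac, hpn, hb0]
  -- ratio inequality over ℝ
  have hd : (0:ℝ) < 2 * (q.den : ℝ) := by positivity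
  have hmu : ∀ n, 4 * q.den + 7 ≤ n →
      (p n : ℝ) * (1 + 1 / (2 * (q.den : ℝ))) ≤ p (n + 1) := by
    intro n hn
    have hk := key n hn
    have hkR : 2 * (q.den:ℝ) * p n + p n ≤ 2 * (q.den:ℝ) * p (n + 1) := by
      rw [hbdef] at hk; exact_mod_cast hk
    have h5 : (p n : ℝ) / (2 * (q.den:ℝ)) ≤ (p (n + 1) : ℝ) - p n := by
      rw [div_le_iff₀ hd]; nlinarith
    rw [mul_add, mul_one, mul_one_div]
    linarith
  set μ : ℝ := 1 + 1 / (2 * (q.den : ℝ)) with hmudef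
  have hmu0 : (0:ℝ) < μ := by rw [hmudef]; positivity
  have hmu1 : (1:ℝ) < μ := by
    rw [hmudef]; nlinarith [one_div_pos.mpr hd]
  set N : ℕ := 4 * q.den + 7 with hNdef
  have hgrow : ∀ k, (p N : ℝ) * μ ^ k ≤ p (N + k) := by
    intro k
    induction k with
    | zero => simp
    | succ k ih =>
      have h1 := hmu (N + k) (by omega)
      calc (p N : ℝ) * μ ^ (k + 1) = ((p N : ℝ) * μ ^ k) * μ := by ring
        _ ≤ (p (N + k) : ℝ) * μ := mul_le_mul_of_nonneg_right ih hmu0.le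
        _ ≤ p ((N + k) + 1) := h1
        _ = p (N + (k + 1)) := by rw [show (N + k) + 1 = N + (k + 1) from by ring]
  have hpN : (0:ℝ) < p N := by exact_mod_cast p_pos N
  have hsum : Summable fun k => (1:ℝ) / p (N + k) := by
    apply Summable.of_nonneg_of_le (fun k => by positivity)
      (fun k => ?_) ((summable_geometric_of_lt_one (by positivity)
        ((div_lt_one hmu0).mpr hmu1)).mul_left (1 / (p N : ℝ)))
    have hpos : (0:ℝ) < (p N : ℝ) * μ ^ k := by positivity
    have h6 : (1:ℝ) / p (N + k) ≤ 1 / ((p N : ℝ) * μ ^ k) :=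
      one_div_le_one_div_of_le hpos (hgrow k)
    calc (1:ℝ) / p (N + k) ≤ 1 / ((p N : ℝ) * μ ^ k) := h6
      _ = 1 / (p N : ℝ) * (1 / μ) ^ k := by
          rw [one_div_pow, mul_one_div, div_div]
  have hsum2 : Summable fun n => (1:ℝ) / p n := by
    rw [← summable_nat_add_iff N]
    exact (summable_congr fun k => by rw [add_comm]).mpr hsum
  -- contradiction with divergence of ∑ 1/p
  have hinj : Function.Injective (fun n => (⟨p n, hp n⟩ : Nat.Primes)) := by
    intro m n h
    exact Nat.nth_injective Nat.infinite_setOf_prime (congrArg Subtype.val h)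
  have hsurj : Function.Surjective (fun n => (⟨p n, hp n⟩ : Nat.Primes)) := by
    intro qq
    obtain ⟨n, hn⟩ := Nat.subset_range_nth qq.2
    exact ⟨n, Subtype.ext hn⟩
  apply Nat.Primes.not_summable_one_div
  rw [← (Equiv.ofBijective (β := Nat.Primes) _ ⟨hinj, hsurj⟩).summable_iff]
  exact Summable.congr hsum2 fun n => rfl
end

section
/- Let a_1, a_2, a_3, \ldots be a sequence of integers with a_1 \ge 2 and a_n < a_{n+1} \le 2 a_n - 1 for all n \ge 1. Then the series c = \sum_{k=1}^\infty (a_k - 1)/(a_1 a_2 \cdots a_{k-1}) converges (the empty product for k = 1 being 1), and its sum c satisfies a_1 < c \le a_1 + 1. -/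
open scoped BigOperators

/-- For a sequence of integers `a` (0-indexed, so `a 0` is the paper's `a_1`) with
`a 0 ≥ 2` and `a n < a (n+1) ≤ 2 a n - 1`, the series
`∑_{k=1}^∞ (a_k - 1)/(a_1 ⋯ a_{k-1})` converges and its sum `c` satisfies
`a_1 < c ≤ a_1 + 1`. -/
theorem statement10 (a : ℕ → ℤ) (h2 : 2 ≤ a 0)
    (hB : ∀ n, a n < a (n + 1) ∧ a (n + 1) ≤ 2 * a n - 1) :
    Summable (fun k => ((a k : ℝ) - 1) / ∏ i ∈ Finset.range k, (a i : ℝ)) ∧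
      (a 0 : ℝ) < (∑' k, ((a k : ℝ) - 1) / ∏ i ∈ Finset.range k, (a i : ℝ)) ∧
      (∑' k, ((a k : ℝ) - 1) / ∏ i ∈ Finset.range k, (a i : ℝ)) ≤ (a 0 : ℝ) + 1 := by
  have ha2 : ∀ n, (2 : ℤ) ≤ a n := by
    intro n
    induction n with
    | zero => exact h2
    | succ n ih => have := (hB n).1; omega
  set A : ℕ → ℝ := fun n => (a n : ℝ) with hAdef
  have hA2 : ∀ n, (2:ℝ) ≤ A n := fun n => by
    simp only [hAdef]; exact_mod_cast ha2 n
  have hApos : ∀ n, (0:ℝ) < A n := fun n => lt_of_lt_of_le two_pos (hA2 n)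
  set P : ℕ → ℝ := fun k => ∏ i ∈ Finset.range k, A i with hPdef
  have hPpos : ∀ k, 0 < P k := fun k => Finset.prod_pos (fun i _ => hApos i)
  have hPsucc : ∀ k, P (k+1) = P k * A k := fun k => Finset.prod_range_succ A k
  have hP0 : P 0 = 1 := by simp [hPdef]
  have hP2 : ∀ k, (2:ℝ)^k ≤ P k := by
    intro k
    calc (2:ℝ)^k = ∏ _i ∈ Finset.range k, (2:ℝ) := by
          simp
    _ ≤ P k := Finset.prod_le_prod (by intros; norm_num) (fun i _ => hA2 i)
  set t : ℕ → ℝ := fun k => (A k - 1) / P k with htdef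
  have htpos : ∀ k, 0 < t k := fun k => div_pos (by linarith [hA2 k]) (hPpos k)
  set z : ℕ → ℝ := fun k => A k / P k with hzdef
  set x : ℕ → ℝ := fun k => (A k + 1) / P k with hxdef
  have hstep1 : ∀ n, A n < A (n+1) := fun n => by
    have := (hB n).1; simp only [hAdef]; exact_mod_cast this
  have hstep2 : ∀ n, A (n+1) ≤ 2 * A n - 1 := fun n => by
    have := (hB n).2; simp only [hAdef]; exact_mod_cast this
  -- upper telescoping
  have hub : ∀ k, t k ≤ x k - x (k+1) := by
    intro k
    have h1 := hPpos k
    have h2 := hApos k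
    have key : x k - x (k+1) - t k = (2 * A k - 1 - A (k+1)) / (P k * A k) := by
      simp only [htdef, hxdef, hPsucc k]
      field_simp
      ring
    have : 0 ≤ (2 * A k - 1 - A (k+1)) / (P k * A k) :=
      div_nonneg (by linarith [hstep2 k]) (by positivity)
    linarith [key ▸ this]
  -- lower telescoping
  have hlb : ∀ k, t k = (z k - z (k+1)) + (A (k+1) - A k) / (P k * A k) := by
    intro k
    have h1 := hPpos k
    have h2 := hApos k
    simp only [htdef, hzdef, hPsucc k]
    field_simp
    ring
  have hxnonneg : ∀ k, 0 ≤ x k := fun k =>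
    le_of_lt (div_pos (by linarith [hA2 k]) (hPpos k))
  have hx0 : x 0 = A 0 + 1 := by simp [hxdef, hP0]
  have hz0 : z 0 = A 0 := by simp [hzdef, hP0]
  -- partial sums bounded above
  have hsumle : ∀ n, ∑ k ∈ Finset.range n, t k ≤ A 0 + 1 := by
    intro n
    calc ∑ k ∈ Finset.range n, t k ≤ ∑ k ∈ Finset.range n, (x k - x (k+1)) :=
          Finset.sum_le_sum (fun k _ => hub k)
    _ = x 0 - x n := Finset.sum_range_sub' x n
    _ ≤ A 0 + 1 := by rw [hx0]; linarith [hxnonneg n]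
  have hsum : Summable t :=
    summable_of_sum_range_le (fun k => (htpos k).le) hsumle
  refine ⟨hsum, ?_, Summable.tsum_le_of_sum_range_le hsum hsumle⟩
  -- lower bound on tsum
  set δ : ℝ := (A 1 - A 0) / (P 0 * A 0) with hδdef
  have hδpos : 0 < δ := div_pos (by linarith [hstep1 0]) (by positivity)
  -- z n is small for large n
  have hzsmall : ∀ k, z (k+1) ≤ 4 / 2 ^ (k+1) := by
    intro k
    have h1 := hPpos k
    have h2 := hApos k
    have : z (k+1) = A (k+1) / (P k * A k) := by rw [hzdef]; simp only [hPsucc k]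
    rw [this]
    have hone : A (k+1) / (P k * A k) ≤ (2 * A k) / (P k * A k) := by
      apply div_le_div_of_nonneg_right ?_ (by positivity)
      linarith [hstep2 k]
    have htwo : (2 * A k) / (P k * A k) = 2 / P k := by
      field_simp
    have hthree : 2 / P k ≤ 2 / 2 ^ k := by
      apply div_le_div_of_nonneg_left (by norm_num) (by positivity) (hP2 k)
    have hfour : (2:ℝ) / 2 ^ k = 4 / 2 ^ (k+1) := by
      rw [pow_succ]; ring
    linarith [hone, htwo ▸ hthree, hfour ▸ hthree]
  -- partial sums lower bound
  have hSlow : ∀ n, A 0 - z (n+1) + δ ≤ ∑ k ∈ Finset.range (n+1), t k := by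
    intro n
    have heq : ∑ k ∈ Finset.range (n+1), t k
        = (z 0 - z (n+1)) + ∑ k ∈ Finset.range (n+1), (A (k+1) - A k) / (P k * A k) := by
      rw [← Finset.sum_range_sub' z (n+1), ← Finset.sum_add_distrib]
      exact Finset.sum_congr rfl (fun k _ => hlb k)
    have hterm : δ ≤ ∑ k ∈ Finset.range (n+1), (A (k+1) - A k) / (P k * A k) := by
      refine Finset.single_le_sum (f := fun k => (A (k+1) - A k) / (P k * A k))
        (fun k _ => div_nonneg (by linarith [hstep1 k]) (mul_pos (hPpos k) (hApos k)).le) ?_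
      simp
    rw [heq, hz0]
    linarith
  -- pick n with z (n+1) < δ
  obtain ⟨n, hn⟩ := pow_unbounded_of_one_lt (4 / δ) (by norm_num : (1:ℝ) < 2)
  have hzlt : z (n+1) < δ := by
    have h4 : 4 / 2 ^ (n+1) < δ := by
      rw [div_lt_iff₀ (by positivity)]
      rw [div_lt_iff₀ hδpos] at hn
      have : (2:ℝ)^n ≤ 2^(n+1) := by
        apply pow_le_pow_right₀ (by norm_num); omega
      nlinarith
    exact lt_of_le_of_lt (hzsmall n) h4
  have htsum_ge : ∑ k ∈ Finset.range (n+1), t k ≤ ∑' k, t k :=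
    Summable.sum_le_tsum _ (fun k _ => (htpos k).le) hsum
  have := hSlow n
  simp only [hAdef] at *
  linarith
end

section
/- Let a_1, a_2, a_3, \ldots be a sequence of integers with a_1 \ge 2 and a_n < a_{n+1} \le 2 a_n - 1 for all n \ge 1, and suppose in addition that for every n there exists some k \ge n with a_{k+1} \le 2 a_k - 2. Let c = \sum_{k=1}^\infty (a_k - 1)/(a_1 a_2 \cdots a_{k-1}) (the empty product for k = 1 being 1), and define f_1 = c and f_{n+1} = \lfloor f_n \rfloor (f_n - \lfloor f_n \rfloor + 1). Then \lfloor f_n \rfloor = a_n for every n \ge 1. -/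
open scoped BigOperators

namespace Stmt11Aux

open Finset

/-- Tail sum `T a n = ∑_{k≥0} (a (n+k) - 1) / ∏_{i<k} a (n+i)`. -/
noncomputable def T (a : ℕ → ℤ) (n : ℕ) : ℝ :=
  ∑' k, ((a (n + k) : ℝ) - 1) / ∏ i ∈ Finset.range k, (a (n + i) : ℝ)

variable {a : ℕ → ℤ}

lemma a_ge (h2 : 2 ≤ a 0) (hB : ∀ n, a n < a (n + 1) ∧ a (n + 1) ≤ 2 * a n - 1) :
    ∀ n : ℕ, (n : ℤ) + 2 ≤ a n := by
  intro n
  induction n with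
  | zero => simpa using h2
  | succ n ih =>
    have := (hB n).1
    push_cast
    omega

lemma P_pos (h2 : 2 ≤ a 0) (hB : ∀ n, a n < a (n + 1) ∧ a (n + 1) ≤ 2 * a n - 1)
    (n k : ℕ) : 0 < ∏ i ∈ Finset.range k, (a (n + i) : ℝ) := by
  apply Finset.prod_pos
  intro i _
  have := a_ge h2 hB (n + i)
  have : (0:ℤ) < a (n + i) := by omega
  exact_mod_cast this

lemma aR_ge (h2 : 2 ≤ a 0) (hB : ∀ n, a n < a (n + 1) ∧ a (n + 1) ≤ 2 * a n - 1)
    (m : ℕ) : (2:ℝ) ≤ (a m : ℝ) := by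
  have := a_ge h2 hB m
  have : (2:ℤ) ≤ a m := by omega
  exact_mod_cast this

lemma term_nonneg (h2 : 2 ≤ a 0) (hB : ∀ n, a n < a (n + 1) ∧ a (n + 1) ≤ 2 * a n - 1)
    (n k : ℕ) : 0 ≤ ((a (n + k) : ℝ) - 1) / ∏ i ∈ Finset.range k, (a (n + i) : ℝ) := by
  apply div_nonneg _ (P_pos h2 hB n k).le
  have := aR_ge h2 hB (n + k)
  linarith

lemma summable_T (h2 : 2 ≤ a 0) (hB : ∀ n, a n < a (n + 1) ∧ a (n + 1) ≤ 2 * a n - 1)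
    (n : ℕ) :
    Summable (fun k => ((a (n + k) : ℝ) - 1) / ∏ i ∈ Finset.range k, (a (n + i) : ℝ)) := by
  apply summable_of_ratio_norm_eventually_le (r := 2/3) (by norm_num)
  filter_upwards [Filter.eventually_ge_atTop 1] with k hk
  have hP := P_pos h2 hB n k
  have ha := a_ge h2 hB (n + k)
  have hb := (hB (n + k)).2
  -- a (n+k) ≥ 3 since n + k ≥ 1
  have h3 : (3:ℤ) ≤ a (n + k) := by omega
  have h3R : (3:ℝ) ≤ (a (n + k) : ℝ) := by exact_mod_cast h3
  have hnum : (a (n + (k+1)) : ℝ) - 1 ≤ 2 * ((a (n + k) : ℝ) - 1) := by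
    have h' : a (n + (k+1)) ≤ 2 * a (n + k) - 1 := by
      have he : n + (k + 1) = n + k + 1 := by ring
      rw [he]; exact hb
    have h'' : (a (n + (k+1)) : ℝ) ≤ 2 * (a (n + k) : ℝ) - 1 := by exact_mod_cast h'
    linarith
  have hprod : (∏ i ∈ Finset.range (k+1), (a (n + i) : ℝ))
      = (∏ i ∈ Finset.range k, (a (n + i) : ℝ)) * (a (n + k) : ℝ) :=
    Finset.prod_range_succ _ _
  have hnn := term_nonneg h2 hB n k
  have hnn' := term_nonneg h2 hB n (k + 1)
  rw [Real.norm_eq_abs, Real.norm_eq_abs, abs_of_nonneg hnn', abs_of_nonneg hnn]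
  rw [hprod]
  have step1 : ((a (n + (k+1)) : ℝ) - 1) /
        ((∏ i ∈ Finset.range k, (a (n + i) : ℝ)) * (a (n + k) : ℝ))
      ≤ (2 * ((a (n + k) : ℝ) - 1)) /
        ((∏ i ∈ Finset.range k, (a (n + i) : ℝ)) * (a (n + k) : ℝ)) := by
    gcongr
  refine step1.trans ?_
  have hPx : (0:ℝ) < (∏ i ∈ Finset.range k, (a (n + i) : ℝ)) * (a (n + k) : ℝ) := by
    positivity
  rw [div_le_iff₀ hPx]
  have hrhs : 2 / 3 * (((a (n + k) : ℝ) - 1) / ∏ i ∈ Finset.range k, (a (n + i) : ℝ)) *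
        ((∏ i ∈ Finset.range k, (a (n + i) : ℝ)) * (a (n + k) : ℝ))
      = 2 / 3 * ((a (n + k) : ℝ) - 1) * (a (n + k) : ℝ) := by
    field_simp
  rw [hrhs]
  nlinarith [mul_nonneg (show (0:ℝ) ≤ (a (n+k):ℝ) - 1 by linarith)
    (show (0:ℝ) ≤ (a (n+k):ℝ) - 3 by linarith)]

lemma T_rec (h2 : 2 ≤ a 0) (hB : ∀ n, a n < a (n + 1) ∧ a (n + 1) ≤ 2 * a n - 1)
    (n : ℕ) : T a n = ((a n : ℝ) - 1) + T a (n + 1) / (a n : ℝ) := by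
  unfold T
  rw [Summable.tsum_eq_zero_add (summable_T h2 hB n)]
  have h0 : ((a (n + 0) : ℝ) - 1) / ∏ i ∈ Finset.range 0, (a (n + i) : ℝ)
      = (a n : ℝ) - 1 := by simp
  rw [h0]
  congr 1
  have hterm : ∀ k, ((a (n + (k+1)) : ℝ) - 1) / ∏ i ∈ Finset.range (k+1), (a (n + i) : ℝ)
      = (((a (n + 1 + k) : ℝ) - 1) / ∏ i ∈ Finset.range k, (a (n + 1 + i) : ℝ)) / (a n : ℝ) := by
    intro k
    have hp : ∏ i ∈ Finset.range (k+1), (a (n + i) : ℝ)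
        = (∏ i ∈ Finset.range k, (a (n + 1 + i) : ℝ)) * (a n : ℝ) := by
      rw [Finset.prod_range_succ']
      simp only [Nat.add_zero]
      congr 1
      apply Finset.prod_congr rfl
      intro i _
      have he : n + (i + 1) = n + 1 + i := by omega
      rw [he]
    rw [hp, div_div]
    have he : n + (k + 1) = n + 1 + k := by omega
    rw [he]
  rw [tsum_congr hterm, tsum_div_const]

lemma T_le (h2 : 2 ≤ a 0) (hB : ∀ n, a n < a (n + 1) ∧ a (n + 1) ≤ 2 * a n - 1)
    (n : ℕ) : T a n ≤ (a n : ℝ) + 1 := by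
  unfold T
  apply Summable.tsum_le_of_sum_range_le (summable_T h2 hB n)
  intro m
  have hterm : ∀ k ∈ Finset.range m,
      ((a (n + k) : ℝ) - 1) / ∏ i ∈ Finset.range k, (a (n + i) : ℝ)
      ≤ ((a (n + k) : ℝ) + 1) / (∏ i ∈ Finset.range k, (a (n + i) : ℝ))
        - ((a (n + (k+1)) : ℝ) + 1) / (∏ i ∈ Finset.range (k+1), (a (n + i) : ℝ)) := by
    intro k _
    have hP := P_pos h2 hB n k
    have haR := aR_ge h2 hB (n + k)
    have hb : (a (n + k + 1) : ℝ) ≤ 2 * (a (n + k) : ℝ) - 1 := by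
      exact_mod_cast (hB (n + k)).2
    have hprod : (∏ i ∈ Finset.range (k+1), (a (n + i) : ℝ))
        = (∏ i ∈ Finset.range k, (a (n + i) : ℝ)) * (a (n + k) : ℝ) :=
      Finset.prod_range_succ _ _
    have he : n + (k + 1) = n + k + 1 := by omega
    have hgk1 : ((a (n + (k+1)) : ℝ) + 1) / (∏ i ∈ Finset.range (k+1), (a (n + i) : ℝ))
        = (((a (n + k + 1) : ℝ) + 1) / (a (n + k) : ℝ))
          / ∏ i ∈ Finset.range k, (a (n + i) : ℝ) := by
      rw [he, hprod, mul_comm, ← div_div]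
    rw [hgk1, ← sub_div]
    have key : (a (n + k) : ℝ) - 1
        ≤ ((a (n + k) : ℝ) + 1) - ((a (n + k + 1) : ℝ) + 1) / (a (n + k) : ℝ) := by
      have hx : (0:ℝ) < (a (n + k) : ℝ) := by linarith
      have hd : ((a (n + k + 1) : ℝ) + 1) / (a (n + k) : ℝ) ≤ 2 := by
        rw [div_le_iff₀ hx]; linarith
      linarith
    gcongr
  calc ∑ k ∈ Finset.range m, ((a (n + k) : ℝ) - 1) / ∏ i ∈ Finset.range k, (a (n + i) : ℝ)
      ≤ ∑ k ∈ Finset.range m,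
          (((a (n + k) : ℝ) + 1) / (∏ i ∈ Finset.range k, (a (n + i) : ℝ))
            - ((a (n + (k+1)) : ℝ) + 1) / (∏ i ∈ Finset.range (k+1), (a (n + i) : ℝ))) :=
        Finset.sum_le_sum hterm
    _ = ((a (n + 0) : ℝ) + 1) / (∏ i ∈ Finset.range 0, (a (n + i) : ℝ))
        - ((a (n + m) : ℝ) + 1) / (∏ i ∈ Finset.range m, (a (n + i) : ℝ)) :=
        Finset.sum_range_sub'
          (fun k => ((a (n + k) : ℝ) + 1) / (∏ i ∈ Finset.range k, (a (n + i) : ℝ))) m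
    _ ≤ ((a (n + 0) : ℝ) + 1) / (∏ i ∈ Finset.range 0, (a (n + i) : ℝ)) := by
        have hgm : 0 ≤ ((a (n + m) : ℝ) + 1) / (∏ i ∈ Finset.range m, (a (n + i) : ℝ)) := by
          apply div_nonneg _ (P_pos h2 hB n m).le
          have := aR_ge h2 hB (n + m)
          linarith
        linarith
    _ = (a n : ℝ) + 1 := by simp

lemma T_ge (h2 : 2 ≤ a 0) (hB : ∀ n, a n < a (n + 1) ∧ a (n + 1) ≤ 2 * a n - 1)
    (n : ℕ) : (a n : ℝ) ≤ T a n := by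
  have hs := summable_T h2 hB n
  have h01 : ∑ k ∈ Finset.range 2, ((a (n + k) : ℝ) - 1) / ∏ i ∈ Finset.range k, (a (n + i) : ℝ)
      ≤ T a n :=
    Summable.sum_le_tsum _ (fun k _ => term_nonneg h2 hB n k) hs
  refine le_trans ?_ h01
  rw [Finset.sum_range_succ, Finset.sum_range_one]
  have haR := aR_ge h2 hB n
  have hx : (0:ℝ) < (a n : ℝ) := by linarith
  have hmono : (a n : ℝ) + 1 ≤ (a (n + 1) : ℝ) := by
    have h' : a n + 1 ≤ a (n + 1) := by have := (hB n).1; omega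
    exact_mod_cast h'
  have h1 : (1:ℝ) ≤ ((a (n + 1) : ℝ) - 1) / (a n : ℝ) := by
    rw [le_div_iff₀ hx]; linarith
  have he : (∏ i ∈ Finset.range 1, (a (n + i) : ℝ)) = (a n : ℝ) := by simp
  simp only [Nat.add_zero, Finset.range_zero, Finset.prod_empty, div_one, he]
  linarith

lemma T_lt (h2 : 2 ≤ a 0) (hB : ∀ n, a n < a (n + 1) ∧ a (n + 1) ≤ 2 * a n - 1) :
    ∀ d n, a (n + d + 1) ≤ 2 * a (n + d) - 2 → T a n < (a n : ℝ) + 1 := by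
  intro d
  induction d with
  | zero =>
    intro n hk
    rw [T_rec h2 hB n]
    have haR := aR_ge h2 hB n
    have hx : (0:ℝ) < (a n : ℝ) := by linarith
    have hT1 := T_le h2 hB (n + 1)
    have hk' : (a (n + 1) : ℝ) ≤ 2 * (a n : ℝ) - 2 := by
      have h' : a (n + 1) ≤ 2 * a n - 2 := by simpa using hk
      exact_mod_cast h'
    have hlt : T a (n + 1) / (a n : ℝ) < 2 := by
      rw [div_lt_iff₀ hx]
      linarith
    linarith
  | succ d ih =>
    intro n hk
    rw [T_rec h2 hB n]
    have haR := aR_ge h2 hB n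
    have hx : (0:ℝ) < (a n : ℝ) := by linarith
    have hT1 : T a (n + 1) < (a (n + 1) : ℝ) + 1 := by
      apply ih (n + 1)
      have he : n + 1 + d = n + (d + 1) := by ring
      rw [he]; exact hk
    have hb : (a (n + 1) : ℝ) ≤ 2 * (a n : ℝ) - 1 := by
      exact_mod_cast (hB n).2
    have hlt : T a (n + 1) / (a n : ℝ) < 2 := by
      rw [div_lt_iff₀ hx]
      nlinarith
    linarith

lemma T_lt' (h2 : 2 ≤ a 0) (hB : ∀ n, a n < a (n + 1) ∧ a (n + 1) ≤ 2 * a n - 1)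
    (hstrict : ∀ n, ∃ k, n ≤ k ∧ a (k + 1) ≤ 2 * a k - 2)
    (n : ℕ) : T a n < (a n : ℝ) + 1 := by
  obtain ⟨k, hnk, hk⟩ := hstrict n
  obtain ⟨d, rfl⟩ := Nat.exists_eq_add_of_le hnk
  exact T_lt h2 hB d n hk

lemma T_floor (h2 : 2 ≤ a 0) (hB : ∀ n, a n < a (n + 1) ∧ a (n + 1) ≤ 2 * a n - 1)
    (hstrict : ∀ n, ∃ k, n ≤ k ∧ a (k + 1) ≤ 2 * a k - 2)
    (n : ℕ) : ⌊T a n⌋ = a n := by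
  rw [Int.floor_eq_iff]
  exact ⟨T_ge h2 hB n, by push_cast; exact T_lt' h2 hB hstrict n⟩

end Stmt11Aux

/-- For a sequence of integers `a` (0-indexed, so `a 0` is the paper's `a_1`)
following Bertrand's postulate, with infinitely many indices where the upper
bound is strict (`a (k+1) ≤ 2 a k - 2`), the constant
`c = ∑_{k=1}^∞ (a_k - 1)/(a_1 ⋯ a_{k-1})` together with the recursion
`f_{n+1} = ⌊f_n⌋ (f_n - ⌊f_n⌋ + 1)` generates the whole sequence:
`⌊f n⌋ = a n` (0-indexed, `f 0 = c`). -/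
theorem statement11 (a : ℕ → ℤ) (h2 : 2 ≤ a 0)
    (hB : ∀ n, a n < a (n + 1) ∧ a (n + 1) ≤ 2 * a n - 1)
    (hstrict : ∀ n, ∃ k, n ≤ k ∧ a (k + 1) ≤ 2 * a k - 2)
    (f : ℕ → ℝ)
    (h1 : f 0 = ∑' k, ((a k : ℝ) - 1) / ∏ i ∈ Finset.range k, (a i : ℝ))
    (hrec : ∀ n, f (n + 1) = (⌊f n⌋ : ℝ) * (f n - ⌊f n⌋ + 1)) :
    ∀ n, ⌊f n⌋ = a n := by
  have key : ∀ n, f n = Stmt11Aux.T a n := by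
    intro n
    induction n with
    | zero =>
      rw [h1]
      unfold Stmt11Aux.T
      simp
    | succ n ih =>
      have hfloor : ⌊f n⌋ = a n := by
        rw [ih]; exact Stmt11Aux.T_floor h2 hB hstrict n
      rw [hrec n, hfloor, ih]
      have hrecT := Stmt11Aux.T_rec h2 hB n
      have haR := Stmt11Aux.aR_ge h2 hB n
      have hx : (a n : ℝ) ≠ 0 := by linarith
      have h' : (a n : ℝ) * Stmt11Aux.T a n
          = (a n : ℝ) * ((a n : ℝ) - 1) + Stmt11Aux.T a (n + 1) := by
        rw [hrecT]
        field_simp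
      linear_combination h'
  intro n
  rw [key n]
  exact Stmt11Aux.T_floor h2 hB hstrict n
end

section
/- Let a_1, a_2, a_3, \ldots be a sequence of integers with a_1 \ge 2 and a_n < a_{n+1} \le 2 a_n - 1 for all n \ge 1, suppose that for every n there exists some k \ge n with a_{k+1} \le 2 a_k - 2, and suppose that a_{n+1}/a_n \to 1 as n \to \infty. Then the constant c = \sum_{k=1}^\infty (a_k - 1)/(a_1 a_2 \cdots a_{k-1}) (the empty product for k = 1 being 1) is irrational. -/
open scoped BigOperators

/-- For a sequence of integers `a` (0-indexed, so `a 0` is the paper's `a_1`)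
following Bertrand's postulate, with infinitely many indices where the upper
bound is strict, and with `a (n+1) / a n → 1`, the constant
`c = ∑_{k=1}^∞ (a_k - 1)/(a_1 ⋯ a_{k-1})` is irrational. -/
theorem statement12 (a : ℕ → ℤ) (h2 : 2 ≤ a 0)
    (hB : ∀ n, a n < a (n + 1) ∧ a (n + 1) ≤ 2 * a n - 1)
    (hstrict : ∀ n, ∃ k, n ≤ k ∧ a (k + 1) ≤ 2 * a k - 2)
    (hratio : Filter.Tendsto (fun n => (a (n + 1) : ℝ) / (a n : ℝ))
      Filter.atTop (nhds 1)) :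
    Irrational (∑' k, ((a k : ℝ) - 1) / ∏ i ∈ Finset.range k, (a i : ℝ)) := by
  classical
  have hmono : StrictMono a := strictMono_nat_of_lt_succ fun n => (hB n).1
  have ha2 : ∀ n, 2 ≤ a n := fun n => le_trans h2 (hmono.le_iff_le.mpr (Nat.zero_le n))
  have haR : ∀ n, (2 : ℝ) ≤ (a n : ℝ) := fun n => by exact_mod_cast ha2 n
  have hapos : ∀ n, (0 : ℝ) < (a n : ℝ) := fun n => lt_of_lt_of_le two_pos (haR n)
  set P : ℕ → ℝ := fun n => ∏ i ∈ Finset.range n, (a i : ℝ) with hPdef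
  set t : ℕ → ℝ := fun k => ((a k : ℝ) - 1) / P k with htdef
  show Irrational (∑' k, t k)
  set w : ℕ → ℕ → ℝ := fun n k => ∏ i ∈ Finset.range k, (a (n + i) : ℝ) with hwdef
  have hPpos : ∀ n, 0 < P n := fun n => Finset.prod_pos fun i _ => hapos i
  have hwpos : ∀ n k, 0 < w n k := fun n k => Finset.prod_pos fun i _ => hapos _
  have hwsucc : ∀ n k, w n (k + 1) = w n k * (a (n + k) : ℝ) := fun n k =>
    Finset.prod_range_succ _ _
  have hw2 : ∀ n k, (2 : ℝ) ^ k ≤ w n k := by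
    intro n k
    calc (2 : ℝ) ^ k = ∏ _i ∈ Finset.range k, (2 : ℝ) := by
          rw [Finset.prod_const, Finset.card_range]
      _ ≤ w n k := Finset.prod_le_prod (fun i _ => by norm_num) (fun i _ => haR _)
  have hPw : ∀ n k, P (n + k) = P n * w n k := fun n k =>
    Finset.prod_range_add (fun i => (a i : ℝ)) n k
  have htnonneg : ∀ k, 0 ≤ t k := by
    intro k
    simp only [htdef]
    apply div_nonneg _ (hPpos k).le
    have := haR k; linarith
  have hsum : Summable t := by
    apply summable_of_ratio_norm_eventually_le (r := 2 / 3) (by norm_num)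
    filter_upwards [Filter.eventually_ge_atTop 1] with n hn
    have h3 : (3 : ℝ) ≤ (a n : ℝ) := by
      have h1 : 3 ≤ a 1 := by linarith [(hB 0).1]
      have h4 := hmono.le_iff_le.mpr hn
      exact_mod_cast le_trans h1 h4
    have hPsucc : P (n + 1) = P n * (a n : ℝ) := Finset.prod_range_succ _ _
    have hub : ((a (n + 1) : ℝ) - 1) ≤ 2 * ((a n : ℝ) - 1) := by
      have h5 : (a (n + 1) : ℝ) ≤ 2 * (a n : ℝ) - 1 := by exact_mod_cast (hB n).2
      linarith
    rw [Real.norm_eq_abs, Real.norm_eq_abs, abs_of_nonneg (htnonneg _),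
      abs_of_nonneg (htnonneg _)]
    simp only [htdef]
    rw [hPsucc, div_le_iff₀ (mul_pos (hPpos n) (hapos n))]
    calc ((a (n + 1) : ℝ) - 1) ≤ 2 / 3 * ((a n : ℝ) - 1) * (a n : ℝ) := by nlinarith
      _ = 2 / 3 * (((a n : ℝ) - 1) / P n) * (P n * (a n : ℝ)) := by
          field_simp [(hPpos n).ne']
  -- suppose the sum is rational
  rintro ⟨r, hr⟩
  have hdenpos : (0 : ℝ) < (r.den : ℝ) := by exact_mod_cast r.pos
  set ε : ℝ := 1 / (4 * (r.den : ℝ)) with hεdef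
  have hεpos : 0 < ε := by positivity
  obtain ⟨N, hN⟩ := (Metric.tendsto_atTop.mp hratio) ε hεpos
  have hstep : ∀ m, N ≤ m → (a (m + 1) : ℝ) - (a m : ℝ) ≤ ε * (a m : ℝ) := by
    intro m hm
    have h1 := hN m hm
    rw [Real.dist_eq] at h1
    have h2 := (abs_lt.mp h1).2
    have h3 : (a (m + 1) : ℝ) / (a m : ℝ) < 1 + ε := by linarith
    have h4 : (a (m + 1) : ℝ) < (1 + ε) * (a m : ℝ) := by
      rwa [div_lt_iff₀ (hapos m)] at h3
    nlinarith [hapos m]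
  -- shifted objects at N
  have hsumN : Summable (fun k => t (k + N)) := (summable_nat_add_iff N).mpr hsum
  set u : ℕ → ℝ := fun k => ((a (N + k) : ℝ) - 1) / w N k with hudef
  have hu : ∀ k, u k = P N * t (k + N) := by
    intro k
    simp only [hudef, htdef]
    rw [Nat.add_comm k N, hPw N k]
    field_simp [(hPpos N).ne', (hwpos N k).ne']
  have hsumu : Summable u := by
    have h1 : Summable (fun k => P N * t (k + N)) := hsumN.mul_left _
    exact h1.congr fun k => (hu k).symm
  have hAtail : ∑' k, u k = P N * ∑' k, t (k + N) := by
    rw [← tsum_mul_left]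
    exact tsum_congr hu
  -- telescoping sum
  have hterm : ∀ k, ((a (N + k) : ℝ) - 1) / w N (k + 1) = 1 / w N k - 1 / w N (k + 1) := by
    intro k
    rw [hwsucc]
    have h1 := (hwpos N k).ne'
    have h2 := (hapos (N + k)).ne'
    field_simp
    try ring
  have hwtend : Filter.Tendsto (fun n => 1 / w N n) Filter.atTop (nhds 0) := by
    apply squeeze_zero (fun n => (one_div_pos.mpr (hwpos N n)).le) (fun n => ?_)
      (tendsto_pow_atTop_nhds_zero_of_lt_one (by norm_num : (0:ℝ) ≤ 1/2) (by norm_num))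
    rw [one_div_pow]
    exact one_div_le_one_div_of_le (by positivity) (hw2 N n)
  have hEnn : ∀ k, 0 ≤ ((a (N + k) : ℝ) - 1) / w N (k + 1) := by
    intro k
    have := haR (N + k)
    apply div_nonneg (by linarith) (hwpos N (k + 1)).le
  have hE : HasSum (fun k => ((a (N + k) : ℝ) - 1) / w N (k + 1)) 1 := by
    rw [hasSum_iff_tendsto_nat_of_nonneg hEnn]
    have hps : ∀ n, ∑ i ∈ Finset.range n, (((a (N + i) : ℝ) - 1) / w N (i + 1))
        = 1 - 1 / w N n := by
      intro n
      calc ∑ i ∈ Finset.range n, (((a (N + i) : ℝ) - 1) / w N (i + 1))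
          = ∑ i ∈ Finset.range n, (1 / w N i - 1 / w N (i + 1)) :=
            Finset.sum_congr rfl fun i _ => hterm i
        _ = 1 / w N 0 - 1 / w N n := Finset.sum_range_sub' _ n
        _ = 1 - 1 / w N n := by simp [hwdef]
    simp only [hps]
    simpa using tendsto_const_nhds.sub hwtend
  -- the remainder R
  set g : ℕ → ℝ := fun k => ((a (N + k + 1) : ℝ) - (a (N + k) : ℝ)) / w N (k + 1) with hgdef
  have hgnonneg : ∀ k, 0 ≤ g k := by
    intro k
    have h1 : (a (N + k) : ℝ) ≤ (a (N + k + 1) : ℝ) := by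
      exact_mod_cast (hmono (Nat.lt_succ_self (N + k))).le
    simp only [hgdef]
    apply div_nonneg (by linarith) (hwpos N (k + 1)).le
  have hgle : ∀ k, g k ≤ ε * (1 / 2) ^ k := by
    intro k
    have h1 : (a (N + k + 1) : ℝ) - (a (N + k) : ℝ) ≤ ε * (a (N + k) : ℝ) :=
      hstep (N + k) (Nat.le_add_right _ _)
    have h2 : (2 : ℝ) ^ k * (a (N + k) : ℝ) ≤ w N (k + 1) := by
      rw [hwsucc]
      exact mul_le_mul_of_nonneg_right (hw2 N k) (hapos _).le
    have h3 : (0 : ℝ) < (2 : ℝ) ^ k * (a (N + k) : ℝ) :=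
      mul_pos (pow_pos two_pos k) (hapos _)
    calc g k ≤ (ε * (a (N + k) : ℝ)) / ((2 : ℝ) ^ k * (a (N + k) : ℝ)) := by
          simp only [hgdef]
          exact div_le_div₀ (mul_nonneg hεpos.le (hapos _).le) h1 h3 h2
      _ = ε * (1 / 2) ^ k := by
          rw [one_div_pow]
          field_simp [(hapos (N + k)).ne']
  have hgeo : Summable (fun k => ε * (1 / 2 : ℝ) ^ k) :=
    (summable_geometric_of_lt_one (by norm_num) (by norm_num)).mul_left ε
  have hsumg : Summable g := Summable.of_nonneg_of_le hgnonneg hgle hgeo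
  set R : ℝ := ∑' k, g k with hRdef
  have hRpos : 0 < R := by
    apply Summable.tsum_pos hsumg hgnonneg 0
    have h1 : (a (N + 0) : ℝ) < (a (N + 0 + 1) : ℝ) := by
      exact_mod_cast hmono (Nat.lt_succ_self (N + 0))
    simp only [hgdef]
    apply div_pos (by linarith) (hwpos _ _)
  have hRle : R ≤ ε * 2 := by
    calc R ≤ ∑' k, ε * (1 / 2 : ℝ) ^ k := Summable.tsum_le_tsum hgle hsumg hgeo
      _ = ε * 2 := by
        rw [tsum_mul_left, tsum_geometric_of_lt_one (by norm_num) (by norm_num)]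
        norm_num
  -- value of the shifted sum
  have husucc : ∀ k, u (k + 1) = g k + ((a (N + k) : ℝ) - 1) / w N (k + 1) := by
    intro k
    simp only [hudef, hgdef]
    rw [← add_div]
    congr 1
    have : N + (k + 1) = N + k + 1 := rfl
    rw [this]
    ring
  have hsumshift : ∑' k, u (k + 1) = R + 1 := by
    calc ∑' k, u (k + 1) = ∑' k, (g k + ((a (N + k) : ℝ) - 1) / w N (k + 1)) :=
          tsum_congr husucc
      _ = R + 1 := by rw [Summable.tsum_add hsumg hE.summable, hE.tsum_eq]
  have hu0 : u 0 = (a N : ℝ) - 1 := by simp [hudef, hwdef]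
  have hAval : ∑' k, u k = (a N : ℝ) + R := by
    rw [Summable.tsum_eq_zero_add hsumu, hu0, hsumshift]
    ring
  -- integrality
  have hdc : (r.den : ℝ) * (∑' k, t k) = (r.num : ℝ) := by
    rw [← hr, Rat.cast_def]
    field_simp
  have hPartial : ∀ k ∈ Finset.range N, P N * t k
      = ((a k : ℝ) - 1) * ∏ i ∈ Finset.range (N - k), (a (k + i) : ℝ) := by
    intro k hk
    have hk' := (Finset.mem_range.mp hk).le
    have hsplitP : P N = P k * ∏ i ∈ Finset.range (N - k), (a (k + i) : ℝ) := by
      simp only [hPdef]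
      rw [← Finset.prod_range_add (fun i => (a i : ℝ)) k (N - k), Nat.add_sub_cancel' hk']
    simp only [htdef]
    rw [hsplitP]
    have h1 := (hPpos k).ne'
    field_simp
  have hsum_partial : P N * ∑ k ∈ Finset.range N, t k
      = ∑ k ∈ Finset.range N, (((a k : ℝ) - 1) * ∏ i ∈ Finset.range (N - k), (a (k + i) : ℝ)) := by
    rw [Finset.mul_sum]
    exact Finset.sum_congr rfl hPartial
  have htail_eq : ∑' k, t (k + N) = (∑' k, t k) - ∑ k ∈ Finset.range N, t k := by
    have h1 := Summable.sum_add_tsum_nat_add N hsum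
    linarith
  set M : ℤ := r.num * (∏ i ∈ Finset.range N, a i)
      - (r.den : ℤ) * ∑ k ∈ Finset.range N, ((a k - 1) * ∏ i ∈ Finset.range (N - k), a (k + i))
      with hMdef
  have hM : (M : ℝ) = (r.den : ℝ) * ∑' k, u k := by
    rw [hAtail, htail_eq]
    have expand : (r.den : ℝ) * (P N * ((∑' k, t k) - ∑ k ∈ Finset.range N, t k))
        = (r.num : ℝ) * P N - (r.den : ℝ) * (P N * ∑ k ∈ Finset.range N, t k) := by
      rw [← hdc]
      ring
    rw [expand, hsum_partial, hMdef]
    push_cast [hPdef]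
    ring
  -- conclusion
  have hfin : ((M - (r.den : ℤ) * a N : ℤ) : ℝ) = (r.den : ℝ) * R := by
    push_cast
    rw [hM, hAval]
    ring
  have hpos' : (0 : ℝ) < ((M - (r.den : ℤ) * a N : ℤ) : ℝ) := by
    rw [hfin]
    exact mul_pos hdenpos hRpos
  have hge1 : (1 : ℝ) ≤ ((M - (r.den : ℤ) * a N : ℤ) : ℝ) := by
    have h1 : 0 < M - (r.den : ℤ) * a N := by exact_mod_cast hpos'
    exact_mod_cast h1
  have hlt : ((M - (r.den : ℤ) * a N : ℤ) : ℝ) ≤ 1 / 2 := by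
    rw [hfin]
    have h1 : (r.den : ℝ) * R ≤ (r.den : ℝ) * (ε * 2) :=
      mul_le_mul_of_nonneg_left hRle hdenpos.le
    have h2 : (r.den : ℝ) * (ε * 2) = 1 / 2 := by
      rw [hεdef]
      field_simp
      ring
    linarith
  linarith
end

section
/- The sequence a_n = n + 1 (that is, 2, 3, 4, 5, \ldots) yields the constant \sum_{k=1}^\infty k/k! = e, and with f_1 = e and the recursion f_{n+1} = \lfloor f_n \rfloor (f_n - \lfloor f_n \rfloor + 1), one has \lfloor f_n \rfloor = n + 1 for every n \ge 1. -/
open scoped BigOperators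

-- tail T n := e - ∑_{i<n+1} 1/i!
lemma tail_lb (n : ℕ) : 1 / ((n+1).factorial : ℝ) ≤
    Real.exp 1 - ∑ i ∈ Finset.range (n+1), 1 / (Nat.factorial i : ℝ) := by
  have h := Real.sum_le_exp_of_nonneg (zero_le_one) (n+2)
  simp only [one_pow] at h
  rw [Finset.sum_range_succ] at h
  linarith

lemma tail_ub (n : ℕ) : Real.exp 1 - ∑ i ∈ Finset.range (n+1), 1 / (Nat.factorial i : ℝ)
    ≤ ((n:ℝ)+2) / ((n+1).factorial * ((n:ℝ)+1)) := by
  have h := Real.exp_bound (x := 1) (by norm_num) (n := n+1) (Nat.succ_pos n)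
  simp only [one_pow, abs_one, one_mul, Nat.succ_eq_add_one] at h
  have := (abs_sub_le_iff.1 h).1
  push_cast at this ⊢
  simp only [one_div] at this ⊢
  ring_nf at this ⊢
  linarith

lemma fac_tail_ge_one (n : ℕ) :
    1 ≤ ((n+1).factorial : ℝ) * (Real.exp 1 - ∑ i ∈ Finset.range (n+1), 1 / (Nat.factorial i : ℝ)) := by
  have hfac : (0:ℝ) < ((n+1).factorial : ℝ) := by positivity
  have lb := tail_lb n
  calc (1:ℝ) = ((n+1).factorial : ℝ) * (1 / ((n+1).factorial : ℝ)) := by field_simp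
    _ ≤ _ := by apply mul_le_mul_of_nonneg_left lb hfac.le

lemma fac_tail_lt_two (n : ℕ) :
    ((n+1).factorial : ℝ) * (Real.exp 1 - ∑ i ∈ Finset.range (n+1), 1 / (Nat.factorial i : ℝ)) < 2 := by
  cases n with
  | zero =>
    have := Real.exp_one_lt_d9
    simp [Finset.sum_range_one]
    linarith
  | succ m =>
    have hfac : (0:ℝ) < ((m+2).factorial : ℝ) := by positivity
    have ub := tail_ub (m+1)
    push_cast at ub
    have h1 : ((m+1+1).factorial : ℝ) * (Real.exp 1 - ∑ i ∈ Finset.range (m+1+1), 1 / (Nat.factorial i : ℝ))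
        ≤ ((m:ℝ)+3) / ((m:ℝ)+2) := by
      calc ((m+1+1).factorial : ℝ) * _ ≤ ((m+1+1).factorial : ℝ) * (((m:ℝ)+1+2) / (((m+1+1).factorial:ℝ) * ((m:ℝ)+1+1))) :=
            mul_le_mul_of_nonneg_left ub (by positivity)
        _ = ((m:ℝ)+3) / ((m:ℝ)+2) := by field_simp; ring
    have h2 : ((m:ℝ)+3) / ((m:ℝ)+2) < 2 := by
      rw [div_lt_iff₀ (by positivity)]; linarith
    linarith

lemma floor_aux (n : ℕ) (x : ℝ)
    (hx : x = ((n+1).factorial : ℝ) * (Real.exp 1 - ∑ i ∈ Finset.range (n+1), 1 / (Nat.factorial i : ℝ)) + (n+1)) :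
    ⌊x⌋ = (n:ℤ) + 2 := by
  have h1 := fac_tail_ge_one n
  have h2 := fac_tail_lt_two n
  rw [Int.floor_eq_iff]
  constructor <;> push_cast <;> linarith

/-- The sequence `a_n = n + 1` (i.e. `2, 3, 4, …`) yields the constant
`∑_{k=1}^∞ k/k! = e`, and the recursion `f_{n+1} = ⌊f_n⌋ (f_n - ⌊f_n⌋ + 1)`
starting from `f 0 = e` has `⌊f n⌋ = n + 2` (0-indexed; i.e. the paper's
`⌊f_n⌋ = n + 1` for `n ≥ 1`). -/
theorem statement13 (f : ℕ → ℝ)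
    (h1 : f 0 = Real.exp 1)
    (hrec : ∀ n, f (n + 1) = (⌊f n⌋ : ℝ) * (f n - ⌊f n⌋ + 1)) :
    (∑' k : ℕ, ((k : ℝ) + 1) / (Nat.factorial (k + 1) : ℝ)) = Real.exp 1 ∧
      ∀ n, ⌊f n⌋ = (n : ℤ) + 2 := by
  constructor
  · have heq : ∀ k : ℕ, ((k : ℝ) + 1) / (Nat.factorial (k + 1) : ℝ) = (1:ℝ)^k / (Nat.factorial k : ℝ) := by
      intro k
      have h0 : (k.factorial:ℝ) ≠ 0 := by positivity
      have h1 : ((k:ℝ)+1) ≠ 0 := by positivity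
      rw [Nat.factorial_succ, one_pow]
      push_cast
      field_simp
    simp_rw [heq]
    rw [Real.exp_eq_exp_ℝ, NormedSpace.exp_eq_tsum_div]
  · have key : ∀ n, f n = ((n+1).factorial : ℝ) *
        (Real.exp 1 - ∑ i ∈ Finset.range (n+1), 1 / (Nat.factorial i : ℝ)) + (n+1) := by
      intro n
      induction n with
      | zero => simp [h1, Finset.sum_range_one]
      | succ m ih =>
        have hfl := floor_aux m (f m) ih
        rw [hrec m, hfl, ih]
        rw [Finset.sum_range_succ (n := m+1)]
        push_cast [Nat.factorial_succ (m+1)]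
        have hfac : ((m+1).factorial : ℝ) ≠ 0 := by positivity
        field_simp
        ring
    intro n
    exact floor_aux n (f n) (key n)
end

section
/- Consider the sequence a_n = 2^{n-1} + 2 (that is, 3, 4, 6, 10, 18, 34, \ldots). Let c = \sum_{k=1}^\infty (2^{k-1} + 1)/\prod_{i=1}^{k-1} (2^{i-1} + 2) (the empty product for k = 1 being 1). Then c converges, and with f_1 = c and the recursion f_{n+1} = \lfloor f_n \rfloor (f_n - \lfloor f_n \rfloor + 1), one has \lfloor f_n \rfloor = 2^{n-1} + 2 for every n \ge 1. -/
open scoped BigOperators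

noncomputable def gg (n k : ℕ) : ℝ :=
  ((2:ℝ)^(n+k) + 1) / ∏ i ∈ Finset.range k, ((2:ℝ)^(n+i) + 2)

lemma prodpos (n k : ℕ) : 0 < ∏ i ∈ Finset.range k, ((2:ℝ)^(n+i) + 2) :=
  Finset.prod_pos fun i _ => by positivity

lemma gg_pos (n k : ℕ) : 0 < gg n k := div_pos (by positivity) (prodpos n k)

lemma gg_zero (n : ℕ) : gg n 0 = (2:ℝ)^n + 1 := by simp [gg]

lemma gg_one (n : ℕ) : gg n 1 = ((2:ℝ)^(n+1) + 1) / ((2:ℝ)^n + 2) := by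
  simp [gg]

lemma gg_two (n : ℕ) :
    gg n 2 = ((2:ℝ)^(n+2) + 1) / (((2:ℝ)^n + 2) * ((2:ℝ)^(n+1) + 2)) := by
  unfold gg
  rw [Finset.prod_range_succ, Finset.prod_range_one]
  norm_num

lemma gg_succ (n k : ℕ) : gg n (k+1) = gg (n+1) k / ((2:ℝ)^n + 2) := by
  unfold gg
  rw [Finset.prod_range_succ']
  have h2 : ∏ i ∈ Finset.range k, ((2:ℝ)^(n+(i+1)) + 2)
      = ∏ i ∈ Finset.range k, ((2:ℝ)^((n+1)+i) + 2) :=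
    Finset.prod_congr rfl fun i _ => by rw [show n+(i+1) = (n+1)+i by omega]
  rw [h2, show n+(k+1) = (n+1)+k by omega, div_div]
  norm_num

lemma one_le_pow2 (m : ℕ) : (1:ℝ) ≤ 2^m := one_le_pow₀ (by norm_num)

lemma gg_ratio (n k : ℕ) : gg n (k+1) ≤ (1/2) * gg n k := by
  unfold gg
  rw [Finset.prod_range_succ]
  have hPpos : 0 < ∏ i ∈ Finset.range k, ((2:ℝ)^(n+i) + 2) := prodpos n k
  have hA : (1:ℝ) ≤ 2^(n+k) := one_le_pow2 _
  set A := (2:ℝ)^(n+k) with hAdef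
  set P := ∏ i ∈ Finset.range k, ((2:ℝ)^(n+i) + 2) with hPdef
  have h2 : (2:ℝ)^(n+(k+1)) = 2*A := by
    rw [hAdef, show n+(k+1) = (n+k)+1 by ring, pow_succ]; ring
  rw [h2, div_le_iff₀ (by positivity)]
  have heq : (1/2) * ((A+1)/P) * (P * (A+2)) = (1/2)*(A+1)*(A+2) := by
    field_simp
  rw [heq]
  nlinarith [hA]

lemma gg_ratio3 (n k : ℕ) (h : 2 ≤ n + k) : gg n (k+1) ≤ (1/3) * gg n k := by
  unfold gg
  rw [Finset.prod_range_succ]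
  have hPpos : 0 < ∏ i ∈ Finset.range k, ((2:ℝ)^(n+i) + 2) := prodpos n k
  have hA : (4:ℝ) ≤ 2^(n+k) := by
    calc (4:ℝ) = 2^2 := by norm_num
    _ ≤ 2^(n+k) := pow_le_pow_right₀ (by norm_num) h
  set A := (2:ℝ)^(n+k) with hAdef
  set P := ∏ i ∈ Finset.range k, ((2:ℝ)^(n+i) + 2) with hPdef
  have h2 : (2:ℝ)^(n+(k+1)) = 2*A := by
    rw [hAdef, show n+(k+1) = (n+k)+1 by ring, pow_succ]; ring
  rw [h2, div_le_iff₀ (by positivity)]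
  have heq : (1/3) * ((A+1)/P) * (P * (A+2)) = (1/3)*(A+1)*(A+2) := by
    field_simp
  rw [heq]
  nlinarith [hA]

lemma gg_le (n k : ℕ) : gg n k ≤ gg n 0 * (1/2)^k := by
  induction k with
  | zero => simp
  | succ k ih =>
    calc gg n (k+1) ≤ (1/2) * gg n k := gg_ratio n k
    _ ≤ (1/2) * (gg n 0 * (1/2)^k) := by linarith
    _ = gg n 0 * (1/2)^(k+1) := by ring

lemma summable_gg (n : ℕ) : Summable (gg n) := by
  apply Summable.of_nonneg_of_le (fun k => (gg_pos n k).le) (gg_le n)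
  exact (summable_geometric_of_lt_one (by norm_num) (by norm_num)).mul_left _

noncomputable def SS (n : ℕ) : ℝ := ∑' k, gg n k

lemma SS_rec (n : ℕ) : SS n = gg n 0 + SS (n+1) / ((2:ℝ)^n + 2) := by
  unfold SS
  rw [Summable.tsum_eq_zero_add (summable_gg n)]
  congr 1
  rw [show (fun k => gg n (k+1)) = (fun k => gg (n+1) k / ((2:ℝ)^n + 2)) from
    funext fun k => gg_succ n k]
  exact tsum_div_const

lemma SS_lb (n : ℕ) : (2:ℝ)^n + 2 ≤ SS n := by
  have h := Summable.sum_le_tsum (Finset.range 2) (fun i _ => (gg_pos n i).le) (summable_gg n)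
  rw [Finset.sum_range_succ, Finset.sum_range_one, gg_zero, gg_one] at h
  have hx : (1:ℝ) ≤ 2^n := one_le_pow2 n
  have h1 : (1:ℝ) ≤ ((2:ℝ)^(n+1) + 1) / ((2:ℝ)^n + 2) := by
    rw [le_div_iff₀ (by positivity), pow_succ]
    nlinarith
  calc (2:ℝ)^n + 2 ≤ (2:ℝ)^n + 1 + ((2:ℝ)^(n+1) + 1) / ((2:ℝ)^n + 2) := by linarith
  _ ≤ SS n := h

lemma SS_ub (n : ℕ) : SS n < (2:ℝ)^n + 3 := by
  have hsplit : ∑ i ∈ Finset.range 2, gg n i + ∑' k, gg n (k+2) = SS n :=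
    Summable.sum_add_tsum_nat_add 2 (summable_gg n)
  have hsum2 : Summable (fun k => gg n (k+2)) :=
    (summable_nat_add_iff 2).mpr (summable_gg n)
  have hb : ∀ k, gg n (k+2) ≤ gg n 2 * (1/3)^k := by
    intro k
    induction k with
    | zero => simp
    | succ k ih =>
      calc gg n (k+3) ≤ (1/3) * gg n (k+2) := gg_ratio3 n (k+2) (by omega)
      _ ≤ (1/3) * (gg n 2 * (1/3)^k) := by linarith
      _ = gg n 2 * (1/3)^(k+1) := by ring
  have hsumg : Summable (fun k : ℕ => gg n 2 * (1/3)^k) :=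
    (summable_geometric_of_lt_one (by norm_num) (by norm_num)).mul_left _
  have htail : ∑' k, gg n (k+2) ≤ gg n 2 * (3/2) := by
    have hle : ∑' k, gg n (k+2) ≤ ∑' k : ℕ, gg n 2 * (1/3)^k :=
      Summable.tsum_le_tsum hb hsum2 hsumg
    have heval : ∑' k : ℕ, gg n 2 * (1/3)^k = gg n 2 * (3/2) := by
      rw [tsum_mul_left, tsum_geometric_of_lt_one (by norm_num) (by norm_num)]
      norm_num
    linarith [hle, heval.le, heval.ge]
  set x := (2:ℝ)^n with hxdef
  have hx : (1:ℝ) ≤ x := one_le_pow2 n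
  have hp1 : (2:ℝ)^(n+1) = 2*x := by rw [pow_succ]; ring
  have hp2 : (2:ℝ)^(n+2) = 4*x := by rw [show n+2 = n+1+1 by ring, pow_succ, hp1]; ring
  have e1 : ((2:ℝ)^(n+1) + 1) / ((2:ℝ)^n + 2) = 2 - 3/(x+2) := by
    rw [hp1]
    have : (0:ℝ) < x + 2 := by linarith
    field_simp
    ring
  have e2 : gg n 2 < 2/(x+2) := by
    rw [gg_two, hp1, hp2]
    rw [div_lt_div_iff₀ (by nlinarith) (by linarith)]
    nlinarith
  have e3 : gg n 2 * (3/2) < 3/(x+2) := by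
    have h32 : (2:ℝ)/(x+2) * (3/2) = 3/(x+2) := by ring
    nlinarith [e2]
  have hfin : SS n ≤ gg n 0 + gg n 1 + gg n 2 * (3/2) := by
    rw [← hsplit, Finset.sum_range_succ, Finset.sum_range_one]
    linarith
  rw [gg_zero, gg_one, e1] at hfin
  have h3pos : (0:ℝ) < 3/(x+2) := by positivity
  calc SS n ≤ x + 1 + (2 - 3/(x+2)) + gg n 2 * (3/2) := hfin
  _ < x + 1 + (2 - 3/(x+2)) + 3/(x+2) := by linarith
  _ = x + 3 := by ring

lemma floor_SS (n : ℕ) : ⌊SS n⌋ = 2^n + 2 := by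
  rw [Int.floor_eq_iff]
  constructor
  · push_cast
    exact SS_lb n
  · push_cast
    have := SS_ub n
    linarith

/-- The sequence `a_n = 2^{n-1} + 2` (i.e. `3, 4, 6, 10, 18, 34, …`; here 0-indexed
as `a n = 2^n + 2`) yields a convergent series
`c = ∑_{k=1}^∞ (2^{k-1} + 1)/∏_{i=1}^{k-1} (2^{i-1} + 2)`, and the recursion
`f_{n+1} = ⌊f_n⌋ (f_n - ⌊f_n⌋ + 1)` starting from `f 0 = c` has
`⌊f n⌋ = 2^n + 2`. -/
theorem statement14 (f : ℕ → ℝ)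
    (h1 : f 0 = ∑' k : ℕ, ((2 : ℝ) ^ k + 1) / ∏ i ∈ Finset.range k, ((2 : ℝ) ^ i + 2))
    (hrec : ∀ n, f (n + 1) = (⌊f n⌋ : ℝ) * (f n - ⌊f n⌋ + 1)) :
    Summable (fun k : ℕ => ((2 : ℝ) ^ k + 1) / ∏ i ∈ Finset.range k, ((2 : ℝ) ^ i + 2)) ∧
      ∀ n, ⌊f n⌋ = 2 ^ n + 2 := by
  have hfS : ∀ n, f n = SS n := by
    intro n
    induction n with
    | zero =>
      rw [h1]
      unfold SS gg
      simp
    | succ n ih =>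
      rw [hrec n, ih, floor_SS n]
      have hrecS := SS_rec n
      rw [gg_zero] at hrecS
      have hpos : (0:ℝ) < (2:ℝ)^n + 2 := by positivity
      push_cast
      have hstep : SS n - ((2:ℝ)^n + 2) + 1 = SS (n+1) / ((2:ℝ)^n + 2) := by
        linarith
      rw [hstep, mul_div_cancel₀ _ (ne_of_gt hpos)]
  constructor
  · have heq : (fun k : ℕ => ((2:ℝ)^k + 1) / ∏ i ∈ Finset.range k, ((2:ℝ)^i + 2))
        = gg 0 := by
      funext k
      unfold gg
      norm_num
    rw [heq]
    exact summable_gg 0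
  · intro n
    rw [hfS n]
    exact floor_SS n
end

section
/- Let \alpha = \sum_{i=1}^\infty p_i / 10^{2^{i+1}}, where p_i is the i-th prime. Then for every n \ge 1, p_n = \lfloor 10^{2^{n+1}} \alpha \rfloor - 10^{2^n} \lfloor 10^{2^n} \alpha \rfloor. -/
open scoped BigOperators

/-- The constant `α = ∑_{i=1}^∞ p_i / 10^{2^{i+1}}`, written 0-indexed:
the `j`-th summand is `p_{j+1} / 10^{2^{j+2}}`. -/
noncomputable def alpha : ℝ := ∑' j : ℕ, (p j : ℝ) / 10 ^ (2 ^ (j + 2))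

lemma p_le_two_pow (k : ℕ) : p k ≤ 2 ^ (k + 1) := by
  induction k with
  | zero => simp [p, Nat.nth_prime_zero_eq_two]
  | succ k ih =>
    have hpk : 2 ≤ p k := (Nat.prime_nth_prime k).two_le
    obtain ⟨q, hq, hlt, hle⟩ := Nat.bertrand (p k) (by omega)
    have h1 : k + 1 ≤ Nat.count Nat.Prime q := by
      have := Nat.count_nth_succ_of_infinite Nat.infinite_setOf_prime k
      calc k + 1 = Nat.count Nat.Prime (p k + 1) := this.symm
        _ ≤ Nat.count Nat.Prime q := Nat.count_monotone _ hlt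
    have h2 : p (k + 1) ≤ q := by
      calc p (k + 1) ≤ Nat.nth Nat.Prime (Nat.count Nat.Prime q) :=
            (Nat.nth_le_nth Nat.infinite_setOf_prime).2 h1
        _ = q := Nat.nth_count hq
    calc p (k + 1) ≤ q := h2
      _ ≤ 2 * p k := hle
      _ ≤ 2 * 2 ^ (k + 1) := by omega
      _ = 2 ^ (k + 2) := by ring

lemma p_le_ten_pow (k : ℕ) : p k ≤ 10 ^ (k + 1) :=
  (p_le_two_pow k).trans (Nat.pow_le_pow_left (by norm_num) _)

lemma key_nat (n i : ℕ) : n + 2 * i + 2 + 2 ^ (n + 1) ≤ 2 ^ (n + i + 2) := by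
  have h1 : n + 2 ≤ 2 ^ (n + 1) := by
    have := Nat.lt_two_pow_self (n := n + 1); omega
  have h2 : i + 2 ≤ 2 ^ (i + 1) := by
    have := Nat.lt_two_pow_self (n := i + 1); omega
  have h3 : 2 ^ (n + i + 2) = 2 ^ (n + 1) * 2 ^ (i + 1) := by
    rw [← pow_add]; ring_nf
  nlinarith

/-- the real term bound for the tail -/
lemma term_le (n i : ℕ) :
    (10 : ℝ) ^ (2 ^ (n + 1)) * ((p (i + n) : ℝ) / 10 ^ (2 ^ (i + n + 2))) ≤ (1 / 10) ^ (i + 1) := by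
  have hnat : p (i + n) * (10 ^ (2 ^ (n + 1)) * 10 ^ (i + 1)) ≤ 10 ^ (2 ^ (i + n + 2)) := by
    calc p (i + n) * (10 ^ (2 ^ (n + 1)) * 10 ^ (i + 1))
        ≤ 10 ^ (i + n + 1) * (10 ^ (2 ^ (n + 1)) * 10 ^ (i + 1)) :=
          Nat.mul_le_mul_right _ (p_le_ten_pow _)
      _ = 10 ^ (i + n + 1 + (2 ^ (n + 1) + (i + 1))) := by rw [← pow_add, ← pow_add]
      _ ≤ 10 ^ (2 ^ (i + n + 2)) := by
          apply Nat.pow_le_pow_right (by norm_num)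
          have h := key_nat n i
          have hcomm : (2:ℕ) ^ (i + n + 2) = 2 ^ (n + i + 2) := by rw [Nat.add_comm i n]
          rw [hcomm]
          omega
  rw [mul_div_assoc', div_pow, one_pow, div_le_div_iff₀ (by positivity) (by positivity)]
  calc (10 : ℝ) ^ 2 ^ (n + 1) * (p (i + n) : ℝ) * 10 ^ (i + 1)
      = (p (i + n) : ℝ) * (10 ^ 2 ^ (n + 1) * 10 ^ (i + 1)) := by ring
    _ ≤ 10 ^ 2 ^ (i + n + 2) := by exact_mod_cast hnat
    _ = 1 * 10 ^ 2 ^ (i + n + 2) := (one_mul _).symm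

lemma summable_f : Summable (fun j : ℕ => (p j : ℝ) / 10 ^ (2 ^ (j + 2))) := by
  refine Summable.of_nonneg_of_le (f := fun j : ℕ => (1 / 10 : ℝ) ^ (j + 1))
    (fun j => by positivity) (fun j => ?_)
    (((summable_geometric_of_lt_one (by norm_num) (by norm_num)).comp_injective
      (add_left_injective 1)))
  have h := term_le 0 j
  have h0 : (0 : ℝ) ≤ (p j : ℝ) / 10 ^ (2 ^ (j + 2)) := by positivity
  norm_num at h
  nlinarith

lemma floor_eq (n : ℕ) :
    ⌊(10 : ℝ) ^ (2 ^ (n + 1)) * alpha⌋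
      = ∑ i ∈ Finset.range n, (p i : ℤ) * 10 ^ (2 ^ (n + 1) - 2 ^ (i + 2)) := by
  have hsum := summable_f
  have hmul : Summable (fun j : ℕ => (10 : ℝ) ^ (2 ^ (n + 1)) * ((p j : ℝ) / 10 ^ (2 ^ (j + 2)))) :=
    hsum.mul_left _
  have hsplit := Summable.sum_add_tsum_nat_add n hmul
  have halpha : (10 : ℝ) ^ (2 ^ (n + 1)) * alpha
      = ∑' j : ℕ, (10 : ℝ) ^ (2 ^ (n + 1)) * ((p j : ℝ) / 10 ^ (2 ^ (j + 2))) := by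
    rw [alpha, tsum_mul_left]
  set T : ℝ := ∑' i : ℕ, (10 : ℝ) ^ (2 ^ (n + 1)) * ((p (i + n) : ℝ) / 10 ^ (2 ^ (i + n + 2)))
    with hT
  have hhead : ∀ i ∈ Finset.range n,
      (10 : ℝ) ^ (2 ^ (n + 1)) * ((p i : ℝ) / 10 ^ (2 ^ (i + 2)))
        = ((p i : ℤ) * 10 ^ (2 ^ (n + 1) - 2 ^ (i + 2)) : ℤ) := by
    intro i hi
    have hi' : i < n := Finset.mem_range.1 hi
    have hle : 2 ^ (i + 2) ≤ 2 ^ (n + 1) := Nat.pow_le_pow_right (by norm_num) (by omega)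
    have hpow : (10 : ℝ) ^ (2 ^ (n + 1))
        = 10 ^ (2 ^ (n + 1) - 2 ^ (i + 2)) * 10 ^ (2 ^ (i + 2)) := by
      rw [← pow_add, Nat.sub_add_cancel hle]
    push_cast
    rw [hpow]
    field_simp
  have hT0 : 0 ≤ T := tsum_nonneg (fun i => by positivity)
  have hT1 : T < 1 := by
    have hle : T ≤ ∑' i : ℕ, ((1 : ℝ) / 10) ^ (i + 1) := by
      apply Summable.tsum_le_tsum (fun i => term_le n i)
      · exact (summable_nat_add_iff
          (f := fun j : ℕ => (10 : ℝ) ^ (2 ^ (n + 1)) * ((p j : ℝ) / 10 ^ (2 ^ (j + 2)))) n).2 hmul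
      · exact (summable_geometric_of_lt_one (by norm_num) (by norm_num)).comp_injective
          (add_left_injective 1)
    have hgeo : ∑' i : ℕ, ((1 : ℝ) / 10) ^ (i + 1) = (1 / 9 : ℝ) := by
      have : ∀ i : ℕ, ((1 : ℝ) / 10) ^ (i + 1) = (1 / 10) * (1 / 10) ^ i := by
        intro i; rw [pow_succ]; ring
      rw [tsum_congr this, tsum_mul_left, tsum_geometric_of_lt_one (by norm_num) (by norm_num)]
      norm_num
    linarith [hle, hgeo ▸ hle]
  have hval : (10 : ℝ) ^ (2 ^ (n + 1)) * alpha
      = ((∑ i ∈ Finset.range n, (p i : ℤ) * 10 ^ (2 ^ (n + 1) - 2 ^ (i + 2)) : ℤ) : ℝ) + T := by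
    rw [halpha, ← hsplit, Finset.sum_congr rfl hhead]
    push_cast
    ring
  rw [hval, Int.floor_intCast_add, Int.floor_eq_zero_iff.2 (Set.mem_Ico.2 ⟨hT0, hT1⟩), add_zero]

/-- `p_n = ⌊10^{2^{n+1}} α⌋ - 10^{2^n} ⌊10^{2^n} α⌋` for all `n ≥ 1`
(here 0-indexed: the paper's `n` is our `n + 1`). -/
theorem statement15 :
    ∀ n : ℕ,
      (p n : ℤ) = ⌊(10 : ℝ) ^ (2 ^ (n + 2)) * alpha⌋
        - 10 ^ (2 ^ (n + 1)) * ⌊(10 : ℝ) ^ (2 ^ (n + 1)) * alpha⌋ := by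
  intro n
  have h1 := floor_eq (n + 1)
  have h2 := floor_eq n
  rw [h1, h2, Finset.sum_range_succ]
  have hlast : (p n : ℤ) * 10 ^ (2 ^ (n + 1 + 1) - 2 ^ (n + 2)) = (p n : ℤ) := by
    have h0 : 2 ^ (n + 1 + 1) - 2 ^ (n + 2) = 0 := Nat.sub_self _
    rw [h0, pow_zero, mul_one]
  have hrest : ∀ i ∈ Finset.range n,
      (p i : ℤ) * 10 ^ (2 ^ (n + 1 + 1) - 2 ^ (i + 2))
        = 10 ^ (2 ^ (n + 1)) * ((p i : ℤ) * 10 ^ (2 ^ (n + 1) - 2 ^ (i + 2))) := by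
    intro i hi
    have hi' : i < n := Finset.mem_range.1 hi
    have hle : 2 ^ (i + 2) ≤ 2 ^ (n + 1) := Nat.pow_le_pow_right (by norm_num) (by omega)
    have he : (2 : ℕ) ^ (n + 1 + 1) = 2 ^ (n + 1) + 2 ^ (n + 1) := by
      rw [pow_succ]; omega
    have h1 : 2 ^ (n + 1) - 2 ^ (i + 2) + 2 ^ (i + 2) = 2 ^ (n + 1) := Nat.sub_add_cancel hle
    have hexp : 2 ^ (n + 1 + 1) - 2 ^ (i + 2) = 2 ^ (n + 1) + (2 ^ (n + 1) - 2 ^ (i + 2)) := by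
      rw [he]; exact Nat.add_sub_assoc hle _
    rw [hexp, pow_add]
    ring
  rw [Finset.sum_congr rfl hrest, ← Finset.mul_sum, hlast]
  ring
end
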